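/- Let $R = \mathbf{C}[s,x,y,z]/(s^2 - x^2 + y^2 - z^2)$, $A = \mathbf{C}[x,y,z]$, and $I' = (x-y, z+s) \subseteq R$ viewed as an $A$-module. Then an element $f_1(x,y,z) + s f_2(x,y,z) \in R$ lies in $I'$ if and only if $f_1 \equiv z f_2 \pmod{(x-y)}$ in $\mathbf{C}[x,y,z]$. -/

import Mathlib

open MvPolynomial

noncomputable section

/-- The polynomial ring `ℂ[s,x,y,z]` with `s = X 0`, `x = X 1`, `y = X 2`, `z = X 3`. -/
abbrev P4 : Type := MvPolynomial (Fin 4) ℂ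

/-- The conifold relation `s² - x² + y² - z²`. -/
def conifoldRel : P4 := X 0 ^ 2 - X 1 ^ 2 + X 2 ^ 2 - X 3 ^ 2

/-- The conifold ring `R = ℂ[s,x,y,z]/(s² - x² + y² - z²)`. -/
abbrev ConifoldRing : Type := P4 ⧸ Ideal.span {conifoldRel}

/-- The quotient map `ℂ[s,x,y,z] → R`. -/
def cq : P4 →+* ConifoldRing := Ideal.Quotient.mk _

/-- The polynomial subring `A = ℂ[x,y,z]` (variables `x = X 0`, `y = X 1`, `z = X 2`),
mapping into `R = ℂ[s,x,y,z]/(s² - x² + y² - z²)` by the natural inclusion. -/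
abbrev A3 : Type := MvPolynomial (Fin 3) ℂ

/-- The inclusion `A = ℂ[x,y,z] → R`. -/
def incl : A3 →ₐ[ℂ] ConifoldRing := aeval fun i => cq (X i.succ)

/-- The ideal `I' = (x - y, z + s)` of the Weil divisor `D'` on the conifold. -/
def Iprime : Ideal ConifoldRing := Ideal.span {cq (X 1 - X 2), cq (X 3 + X 0)}

/-!
STATEMENT 8: an element `f₁(x,y,z) + s·f₂(x,y,z)` of `R` lies in `I' = (x-y, z+s)`
if and only if `f₁ ≡ z·f₂ (mod (x-y))` in `ℂ[x,y,z]`.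
-/
/-- Substitution `s ↦ -z, x ↦ x, y ↦ x, z ↦ z`. -/
def Phi : P4 →ₐ[ℂ] A3 := aeval ![-X 2, X 0, X 0, X 2]

lemma Phi_rel : Phi conifoldRel = 0 := by
  simp [conifoldRel, Phi]

def Phi' : ConifoldRing →ₐ[ℂ] A3 :=
  Ideal.Quotient.liftₐ _ Phi (by
    intro a ha
    rw [Ideal.mem_span_singleton] at ha
    obtain ⟨c, rfl⟩ := ha
    rw [map_mul, Phi_rel, zero_mul])

lemma Phi'_cq (p : P4) : Phi' (cq p) = Phi p := rfl

/-- Substitution `y ↦ x` on `A3`. -/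
def sig : A3 →ₐ[ℂ] A3 := aeval ![X 0, X 0, X 2]

lemma Phi'_incl (f : A3) : Phi' (incl f) = sig f := by
  have : (Phi'.comp incl) = sig := by
    apply MvPolynomial.algHom_ext
    intro i
    fin_cases i <;> simp [incl, Phi'_cq, Phi, sig]
  calc Phi' (incl f) = (Phi'.comp incl) f := rfl
  _ = sig f := by rw [this]

lemma dvd_sub_sig (g : A3) : (X 0 - X 1 : A3) ∣ g - sig g := by
  induction g using MvPolynomial.induction_on with
  | C a => simp [sig]
  | add p q hp hq =>
      rw [map_add, add_sub_add_comm]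
      exact dvd_add hp hq
  | mul_X p i hp =>
      rw [map_mul]
      have key : p * X i - sig p * sig (X i)
          = (p - sig p) * X i + sig p * (X i - sig (X i)) := by ring
      rw [key]
      refine dvd_add (Dvd.dvd.mul_right hp _) (Dvd.dvd.mul_left ?_ _)
      fin_cases i <;> simp [sig]
      exact ⟨-1, by ring⟩

theorem stmt8 (f₁ f₂ : A3) :
    incl f₁ + cq (X 0) * incl f₂ ∈ Iprime ↔ (X 0 - X 1 : A3) ∣ f₁ - X 2 * f₂ := by
  constructor
  · intro h
    have hker : Phi' (incl f₁ + cq (X 0) * incl f₂) = 0 := by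
      have hle : Iprime ≤ RingHom.ker Phi'.toRingHom := by
        rw [Iprime, Ideal.span_le]
        intro a ha
        simp only [Set.mem_insert_iff, Set.mem_singleton_iff] at ha
        rcases ha with rfl | rfl <;>
          · simp [RingHom.mem_ker, Phi'_cq, Phi]
      exact hle h
    have hsig : sig (f₁ - X 2 * f₂) = 0 := by
      have h0 : Phi' (cq (X 0)) = -X 2 := by simp [Phi'_cq, Phi]
      rw [map_add, map_mul, Phi'_incl, Phi'_incl, h0] at hker
      have : sig (f₁ - X 2 * f₂) = sig f₁ + -X 2 * sig f₂ := by
        rw [map_sub, map_mul]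
        have : sig (X 2) = (X 2 : A3) := by simp [sig]
        rw [this]; ring
      rw [this, hker]
    have := dvd_sub_sig (f₁ - X 2 * f₂)
    rwa [hsig, sub_zero] at this
  · rintro ⟨h, hh⟩
    rw [Iprime, Ideal.mem_span_pair]
    refine ⟨incl h, incl f₂, ?_⟩
    have h1 : incl (X 0 - X 1) = cq (X 1 - X 2) := by simp [incl, map_sub, cq]
    have h2 : incl (X 2) = cq (X 3) := by simp [incl]
    have hf : f₁ = X 2 * f₂ + (X 0 - X 1) * h := by
      rw [← hh]; ring
    rw [hf]
    simp only [map_add, map_mul, h1, h2]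
    ring

end
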